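/- Let f₂ : [0,1] → [0,1] be defined by f₂(x) = x/2 + 1/4 for 0 ≤ x < 1/2 and f₂(x) = x/2 for 1/2 ≤ x ≤ 1. Then f₂ has no periodic points and admits no invariant Borel probability measure: there is no Borel probability measure μ on [0,1] with μ(f₂⁻¹(B)) = μ(B) for all Borel sets B. -/

import Mathlib

open Set MeasureTheory Filter

/-- The map `f₂` of the final remarks: `f₂(x) = x/2 + 1/4` on `[0,1/2)` and
`f₂(x) = x/2` on `[1/2,1]`. -/
noncomputable def f₂ (x : ℝ) : ℝ := if x < 1/2 then x/2 + 1/4 else x/2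

/-- `[0,1/2)` is forward invariant and `f₂` increases strictly there. -/
lemma f₂_step {x : ℝ} (h0 : 0 ≤ x) (h1 : x < 1/2) :
    x < f₂ x ∧ f₂ x < 1/2 ∧ 0 ≤ f₂ x := by
  simp only [f₂, if_pos h1]
  refine ⟨by linarith, by linarith, by linarith⟩

lemma f₂_iter_mem {x : ℝ} (h0 : 0 ≤ x) (h1 : x < 1/2) (k : ℕ) :
    f₂^[k] x < 1/2 ∧ 0 ≤ f₂^[k] x ∧ x ≤ f₂^[k] x := by
  induction k with
  | zero => exact ⟨h1, h0, le_refl x⟩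
  | succ n ih =>
    obtain ⟨ha, hb, hc⟩ := ih
    obtain ⟨hd, he, hf⟩ := f₂_step hb ha
    rw [Function.iterate_succ_apply']
    exact ⟨he, hf, le_trans hc hd.le⟩

lemma f₂_iter_gt {x : ℝ} (h0 : 0 ≤ x) (h1 : x < 1/2) (k : ℕ) :
    x < f₂^[k + 1] x := by
  obtain ⟨ha, hb, hc⟩ := f₂_iter_mem h0 h1 k
  obtain ⟨hd, _, _⟩ := f₂_step hb ha
  rw [Function.iterate_succ_apply']
  linarith

lemma f₂_iter_lt_half {x : ℝ} (h0 : 0 ≤ x) (h1 : x ≤ 1/2) (k : ℕ) :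
    f₂^[k + 1] x < 1/2 := by
  rw [Function.iterate_succ_apply]
  rcases lt_or_eq_of_le h1 with h | h
  · obtain ⟨_, hb, _⟩ := f₂_step h0 h
    exact (f₂_iter_mem ((f₂_step h0 h).2.2) ((f₂_step h0 h).2.1) k).1
  · have : f₂ x = 1/4 := by subst h; norm_num [f₂]
    rw [this]
    exact (f₂_iter_mem (by norm_num) (by norm_num) k).1

lemma pre_singleton_one : f₂ ⁻¹' {(1:ℝ)} = {(2:ℝ)} := by
  ext x
  simp only [mem_preimage, mem_singleton_iff, f₂]
  split_ifs with h <;> constructor <;> intro h2 <;> linarith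

lemma pre_base : f₂ ⁻¹' (Ico (1/4:ℝ) (1/2)) = Ico (0:ℝ) 1 := by
  ext x
  simp only [mem_preimage, mem_Ico, f₂]
  split_ifs with h <;> constructor <;> rintro ⟨ha, hb⟩ <;>
    exact ⟨by linarith, by linarith⟩

/-- The shrinking intervals. -/
noncomputable def Sf (n : ℕ) : Set ℝ := Ico (1/2 - (1/2:ℝ)^(n+2)) (1/2)

lemma pow_half_le (n : ℕ) : ((1:ℝ)/2)^(n+2) ≤ 1/4 := by
  calc ((1:ℝ)/2)^(n+2) ≤ (1/2)^2 :=
        pow_le_pow_of_le_one (by norm_num) (by norm_num) (by omega)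
    _ = 1/4 := by norm_num

lemma pow_half_pos (n : ℕ) : (0:ℝ) < (1/2:ℝ)^(n+2) := by positivity

lemma pre_step (n : ℕ) :
    f₂ ⁻¹' (Sf (n+1)) = Sf n ∪ Ico (1 - (1/2:ℝ)^(n+2)) 1 := by
  have hpow : ((1:ℝ)/2)^(n+1+2) = (1/2)^(n+2) * (1/2) := by ring
  have he := pow_half_le n
  have hp := pow_half_pos n
  ext x
  simp only [mem_preimage, Sf, mem_Ico, mem_union, f₂]
  split_ifs with h
  · constructor
    · rintro ⟨ha, hb⟩
      exact Or.inl ⟨by rw [hpow] at ha; linarith, h⟩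
    · rintro (⟨ha, hb⟩ | ⟨ha, hb⟩)
      · exact ⟨by rw [hpow]; linarith, by linarith⟩
      · exact absurd h (by linarith)
  · push_neg at h
    constructor
    · rintro ⟨ha, hb⟩
      exact Or.inr ⟨by rw [hpow] at ha; linarith, by linarith⟩
    · rintro (⟨ha, hb⟩ | ⟨ha, hb⟩)
      · exact absurd hb (by linarith)
      · exact ⟨by rw [hpow]; linarith, by linarith⟩

lemma Sf_antitone : Antitone Sf := by
  intro n m hnm
  apply Ico_subset_Ico_left
  have : ((1:ℝ)/2)^(m+2) ≤ (1/2)^(n+2) :=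
    pow_le_pow_of_le_one (by norm_num) (by norm_num) (by omega)
  linarith

lemma Sf_iInter : ⋂ n, Sf n = ∅ := by
  ext x
  simp only [mem_iInter, Sf, mem_Ico, mem_empty_iff_false, iff_false]
  intro hall
  have hx : x < 1/2 := (hall 0).2
  obtain ⟨n, hn⟩ := exists_pow_lt_of_lt_one (by linarith : (0:ℝ) < 1/2 - x)
    (by norm_num : (1:ℝ)/2 < 1)
  have h2 : ((1:ℝ)/2)^(n+2) ≤ (1/2)^n :=
    pow_le_pow_of_le_one (by norm_num) (by norm_num) (by omega)
  have := (hall n).1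
  linarith

/-- `f₂` maps `[0,1]` to `[0,1]`, has no periodic points in `[0,1]`, and
admits no invariant Borel probability measure on `[0,1]`. -/
theorem stmt15 :
    MapsTo f₂ (Icc (0:ℝ) 1) (Icc (0:ℝ) 1) ∧
    (∀ x ∈ Icc (0:ℝ) 1, ∀ k : ℕ, 1 ≤ k → f₂^[k] x ≠ x) ∧
    ¬ ∃ μ : Measure ℝ, IsProbabilityMeasure μ ∧ μ (Icc (0:ℝ) 1) = 1 ∧
        ∀ B : Set ℝ, MeasurableSet B → μ (f₂ ⁻¹' B) = μ B := by
  refine ⟨?_, ?_, ?_⟩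
  · -- MapsTo
    rintro x ⟨h0, h1⟩
    simp only [f₂, mem_Icc]
    split_ifs with h <;> constructor <;> linarith
  · -- no periodic points
    rintro x ⟨h0, h1⟩ k hk heq
    obtain ⟨m, rfl⟩ : ∃ m, k = m + 1 := ⟨k - 1, by omega⟩
    rcases lt_or_ge x (1/2) with hx | hx
    · exact absurd heq (ne_of_gt (f₂_iter_gt h0 hx m))
    · -- x ∈ [1/2, 1]
      have hfx : f₂ x = x/2 := if_neg (not_lt.mpr hx)
      rcases Nat.eq_zero_or_pos m with rfl | hm
    -- m = 0 : f x = x/2 ≠ x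
      · rw [Function.iterate_one, hfx] at heq
        linarith
      · obtain ⟨j, rfl⟩ : ∃ j, m = j + 1 := ⟨m - 1, by omega⟩
        rw [Function.iterate_succ_apply, hfx] at heq
        have : f₂^[j+1] (x/2) < 1/2 :=
          f₂_iter_lt_half (by linarith) (by linarith) j
        linarith
  · -- no invariant measure
    rintro ⟨μ, hprob, h1, hinv⟩
    have hcompl : μ ((Icc (0:ℝ) 1)ᶜ) = 0 := by
      rw [prob_compl_eq_zero_iff measurableSet_Icc]; exact h1
    have h2zero : μ {(2:ℝ)} = 0 := by
      refine measure_mono_null ?_ hcompl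
      intro y hy; simp only [mem_singleton_iff] at hy
      subst hy; norm_num [mem_Icc]
    have h1zero : μ {(1:ℝ)} = 0 := by
      have := hinv {(1:ℝ)} (measurableSet_singleton 1)
      rw [pre_singleton_one] at this
      rw [← this, h2zero]
    have hIco : μ (Ico (0:ℝ) 1) = 1 := by
      have : μ (Ico (0:ℝ) 1) = μ (Icc (0:ℝ) 1 \ {1}) := by rw [Icc_sdiff_right]
      rw [this, measure_diff_null h1zero, h1]
    have hSf : ∀ n, μ (Sf n) = 1 := by
      intro n
      induction n with
      | zero =>
        have := hinv (Sf 0) measurableSet_Ico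
        rw [show Sf 0 = Ico (1/4:ℝ) (1/2) by norm_num [Sf], pre_base] at this
        rw [show Sf 0 = Ico (1/4:ℝ) (1/2) by norm_num [Sf], ← this, hIco]
      | succ n ih =>
        have hinvn := hinv (Sf (n+1)) measurableSet_Ico
        rw [pre_step n] at hinvn
        have hle : μ (Sf n) ≤ μ (Sf (n+1)) := by
          rw [← hinvn]; exact measure_mono subset_union_left
        rw [ih] at hle
        exact le_antisymm prob_le_one hle
    have htend : Tendsto (μ ∘ Sf) atTop (nhds (μ (⋂ n, Sf n))) :=
      tendsto_measure_iInter_atTop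
        (fun n => (measurableSet_Ico (a := 1/2 - (1/2:ℝ)^(n+2)) (b := 1/2)).nullMeasurableSet)
        Sf_antitone ⟨0, by rw [hSf 0]; exact ENNReal.one_ne_top⟩
    rw [Sf_iInter, measure_empty] at htend
    have hconst : Tendsto (μ ∘ Sf) atTop (nhds 1) := by
      have : (μ ∘ Sf) = fun _ => 1 := funext fun n => hSf n
      rw [this]; exact tendsto_const_nhds
    exact one_ne_zero (tendsto_nhds_unique hconst htend)
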